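/- Let ε > 0 be such that the projection p : ℝ^d → 𝕋^d is injective on the ball B(0, ε·‖A‖). Let x, y ∈ 𝕋^d with d(x,y) < ε, and let K ≥ 0 be an integer such that d(A^l x, A^l y) < ε for every integer 0 ≤ l ≤ K. Let v be the unique representative of x − y in B(0, ε) and write v = v_s + v_u with v_s ∈ E_s, v_u ∈ E_u. Then ‖v_u‖ < λ^K · ε. In particular, if d(A^k x, A^k y) < ε for all integers k ≥ 0, then v ∈ E_s. -/

import Mathlib

noncomputable section

open scoped BigOperators

/-- The integer lattice `ℤ^d` inside `ℝ^d`. -/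
def intLattice (d : ℕ) : AddSubgroup (Fin d → ℝ) :=
  AddSubgroup.pi Set.univ fun _ => AddSubgroup.zmultiples (1 : ℝ)

/-- The torus `𝕋^d = ℝ^d / ℤ^d`. -/
abbrev Torus (d : ℕ) := (Fin d → ℝ) ⧸ intLattice d

/-- The natural projection `p : ℝ^d → 𝕋^d`. -/
def Tproj (d : ℕ) : (Fin d → ℝ) →+ Torus d := QuotientAddGroup.mk' (intLattice d)

/-- The real matrix obtained from an integer matrix. -/
def matR {d : ℕ} (A : Matrix (Fin d) (Fin d) ℤ) : Matrix (Fin d) (Fin d) ℝ :=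
  A.map (Int.cast : ℤ → ℝ)

lemma intLattice_mapsTo {d : ℕ} (A : Matrix (Fin d) (Fin d) ℤ) :
    intLattice d ≤ (intLattice d).comap (matR A).mulVecLin.toAddMonoidHom := by
  intro x hx
  rw [AddSubgroup.mem_comap]
  rw [intLattice, AddSubgroup.mem_pi] at hx ⊢
  intro i _
  rw [AddSubgroup.mem_zmultiples_iff]
  choose k hk using fun j => AddSubgroup.mem_zmultiples_iff.mp (hx j (Set.mem_univ j))
  have hx' : ∀ j, (k j : ℝ) = x j := by
    intro j
    have := hk j
    rwa [zsmul_eq_mul, mul_one] at this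
  refine ⟨∑ j, A i j * k j, ?_⟩
  rw [zsmul_eq_mul, mul_one]
  have : (matR A).mulVecLin.toAddMonoidHom x i = ∑ j, (A i j : ℝ) * x j := by
    simp [matR, Matrix.mulVecLin_apply, Matrix.mulVec, dotProduct]
  rw [this]
  push_cast
  exact Finset.sum_congr rfl fun j _ => by rw [hx' j]

/-- The map on the torus induced by an integer matrix. -/
def tmap {d : ℕ} (A : Matrix (Fin d) (Fin d) ℤ) : Torus d →+ Torus d :=
  QuotientAddGroup.map (intLattice d) (intLattice d)
    (matR A).mulVecLin.toAddMonoidHom (intLattice_mapsTo A)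

/-- `iterZ A B k` is the `k`-th power (`k ∈ ℤ`) of the toral automorphism induced by `A`,
where `B` is the integer inverse of `A`. -/
def iterZ {d : ℕ} (A B : Matrix (Fin d) (Fin d) ℤ) (k : ℤ) (x : Torus d) : Torus d :=
  if 0 ≤ k then (⇑(tmap A))^[k.toNat] x else (⇑(tmap B))^[(-k).toNat] x

/-- The quotient "metric" on the torus induced by a norm `N` on `ℝ^d`. -/
def qdist {d : ℕ} (N : (Fin d → ℝ) → ℝ) (x y : Torus d) : ℝ :=
  sInf (N '' {v | Tproj d v = x - y})

/-- A norm on `ℝ^d` adapted to the hyperbolic matrix `A` (with integer inverse `B`),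
together with the stable/unstable splitting. -/
structure AdaptedNorm (d : ℕ) (A B : Matrix (Fin d) (Fin d) ℤ) where
  N : (Fin d → ℝ) → ℝ
  Es : Submodule ℝ (Fin d → ℝ)
  Eu : Submodule ℝ (Fin d → ℝ)
  compl : IsCompl Es Eu
  EsInvA : ∀ v ∈ Es, (matR A).mulVec v ∈ Es
  EuInvA : ∀ v ∈ Eu, (matR A).mulVec v ∈ Eu
  EsInvB : ∀ v ∈ Es, (matR B).mulVec v ∈ Es
  EuInvB : ∀ v ∈ Eu, (matR B).mulVec v ∈ Eu
  nonneg : ∀ v, 0 ≤ N v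
  eq_zero_iff : ∀ v, N v = 0 ↔ v = 0
  norm_smul : ∀ (c : ℝ) (v), N (c • v) = |c| * N v
  triangle : ∀ v w, N (v + w) ≤ N v + N w
  adapted : ∀ vs ∈ Es, ∀ vu ∈ Eu, N (vs + vu) = max (N vs) (N vu)
  lam : ℝ
  lam_nonneg : 0 ≤ lam
  lam_lt_one : lam < 1
  contract_s : ∀ v ∈ Es, N ((matR A).mulVec v) ≤ lam * N v
  contract_u : ∀ v ∈ Eu, N ((matR B).mulVec v) ≤ lam * N v
  cA : ℝ
  cB : ℝ
  boundA : ∀ v, N ((matR A).mulVec v) ≤ cA * N v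
  boundB : ∀ v, N ((matR B).mulVec v) ≤ cB * N v

/-- Hyperbolicity: no complex eigenvalue of modulus 1. -/
def IsHyperbolic {d : ℕ} (A : Matrix (Fin d) (Fin d) ℤ) : Prop :=
  ∀ z : ℂ, ((A.map (Int.cast : ℤ → ℂ)).charpoly).IsRoot z → ‖z‖ ≠ 1

/-- Local stable set `W^s_ε(x)` for the toral map induced by `A`
(taking `A` to be the inverse matrix gives the local unstable set). -/
def Wstable {d : ℕ} (A : Matrix (Fin d) (Fin d) ℤ) (N : (Fin d → ℝ) → ℝ) (ε : ℝ)
    (x : Torus d) : Set (Torus d) :=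
  {y | ∀ n : ℕ, qdist N ((⇑(tmap A))^[n] x) ((⇑(tmap A))^[n] y) ≤ ε}

/-- A rectangle: a set of diameter at most `ε` stable under the local product `[x,y]`. -/
def IsRectangle {d : ℕ} (A B : Matrix (Fin d) (Fin d) ℤ) (N : (Fin d → ℝ) → ℝ) (ε : ℝ)
    (R : Set (Torus d)) : Prop :=
  (∀ x ∈ R, ∀ y ∈ R, qdist N x y ≤ ε) ∧
  (∀ x ∈ R, ∀ y ∈ R, ∀ z, z ∈ Wstable A N ε x ∩ Wstable B N ε y → z ∈ R)

/-- A Markov partition for the toral automorphism induced by `A` (with inverse `B`). -/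
structure IsMarkovPartition {d m : ℕ} (A B : Matrix (Fin d) (Fin d) ℤ)
    (N : (Fin d → ℝ) → ℝ) (ε : ℝ) (R : Fin m → Set (Torus d)) : Prop where
  cover : (⋃ i, R i) = Set.univ
  rect : ∀ i, IsRectangle A B N ε (R i)
  proper : ∀ i, R i = closure (interior (R i))
  disj : ∀ i j, i ≠ j → interior (R i) ∩ interior (R j) = ∅
  markov_s : ∀ i j, ∀ x ∈ interior (R i), tmap A x ∈ interior (R j) →
      (⇑(tmap A)) '' (Wstable A N ε x ∩ R i) ⊆ Wstable A N ε (tmap A x) ∩ R j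
  markov_u : ∀ i j, ∀ x ∈ interior (R i), tmap A x ∈ interior (R j) →
      Wstable B N ε (tmap A x) ∩ R j ⊆ (⇑(tmap A)) '' (Wstable B N ε x ∩ R i)

/-- The adjacency relation of a Markov partition: `𝒜_{ij} = 1` iff
`int(R_i) ∩ A⁻¹(int(R_j)) ≠ ∅`. -/
def adjacent {d m : ℕ} (A : Matrix (Fin d) (Fin d) ℤ) (R : Fin m → Set (Torus d))
    (i j : Fin m) : Prop :=
  (interior (R i) ∩ (⇑(tmap A)) ⁻¹' interior (R j)).Nonempty

/-- The shift space `Ω` of bi-infinite admissible sequences. -/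
def shiftSpace {d m : ℕ} (A : Matrix (Fin d) (Fin d) ℤ) (R : Fin m → Set (Torus d)) :
    Set (ℤ → Fin m) :=
  {ω | ∀ k : ℤ, adjacent A R (ω k) (ω (k + 1))}

/-- The shift map `θ`. -/
def shiftMap {m : ℕ} (ω : ℤ → Fin m) : ℤ → Fin m := fun k => ω (k + 1)


lemma iterate_addHom_sub {G : Type*} [AddCommGroup G] (f : G →+ G) (l : ℕ) (a b : G) :
    (⇑f)^[l] (a - b) = (⇑f)^[l] a - (⇑f)^[l] b := by
  induction l with
  | zero => simp
  | succ n ih =>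
      rw [Function.iterate_succ_apply', Function.iterate_succ_apply',
        Function.iterate_succ_apply', ih]
      exact map_sub f _ _

/-- **Proposition 2.6** (expansiveness, forward version): if `p` is injective on
`B(0, ε‖A‖)`, `x, y ∈ 𝕋^d`, and `d(A^l x, A^l y) < ε` for `0 ≤ l ≤ K`, then the unique
representative `v` of `x − y` in `B(0,ε)` has unstable component `‖v_u‖ < λ^K ε`.
In particular if `d(A^k x, A^k y) < ε` for all `k ≥ 0` then `v ∈ E_s`. -/
theorem statement6
    (d : ℕ) (hd : 1 ≤ d)
    (A B : Matrix (Fin d) (Fin d) ℤ) (hAB : A * B = 1) (hBA : B * A = 1)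
    (hhyp : IsHyperbolic A)
    (𝔑 : AdaptedNorm d A B)
    (ε : ℝ) (hε : 0 < ε)
    (hinj : Set.InjOn (⇑(Tproj d)) {v | 𝔑.N v < ε * 𝔑.cA})
    (x y : Torus d)
    (K : ℕ)
    (hK : ∀ l : ℕ, l ≤ K → qdist 𝔑.N ((⇑(tmap A))^[l] x) ((⇑(tmap A))^[l] y) < ε)
    (v : Fin d → ℝ) (hv : Tproj d v = x - y) (hvball : 𝔑.N v < ε)
    (vs vu : Fin d → ℝ) (hvs : vs ∈ 𝔑.Es) (hvu : vu ∈ 𝔑.Eu) (hsum : v = vs + vu) :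
    𝔑.N vu < 𝔑.lam ^ K * ε ∧
      ((∀ k : ℕ, qdist 𝔑.N ((⇑(tmap A))^[k] x) ((⇑(tmap A))^[k] y) < ε) → v ∈ 𝔑.Es) := by
  classical
  set f : (Fin d → ℝ) → (Fin d → ℝ) := (matR A).mulVec with hf
  have hmul : ∀ M N : Matrix (Fin d) (Fin d) ℤ, matR (M * N) = matR M * matR N := by
    intro M N
    exact Matrix.map_mul (f := Int.castRingHom ℝ)
  have hone : matR (1 : Matrix (Fin d) (Fin d) ℤ) = 1 := by
    simp [matR, Matrix.map_one]
  have hmatAB : matR A * matR B = 1 := by rw [← hmul, hAB, hone]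
  have hmatBA : matR B * matR A = 1 := by rw [← hmul, hBA, hone]
  have hABvec : ∀ w, (matR A).mulVec ((matR B).mulVec w) = w := fun w => by
    rw [Matrix.mulVec_mulVec, hmatAB, Matrix.one_mulVec]
  have hBAvec : ∀ w, (matR B).mulVec ((matR A).mulVec w) = w := fun w => by
    rw [Matrix.mulVec_mulVec, hmatBA, Matrix.one_mulVec]
  have hN0 : 𝔑.N 0 = 0 := (𝔑.eq_zero_iff 0).mpr rfl
  have hNpos : ∀ w : Fin d → ℝ, w ≠ 0 → 0 < 𝔑.N w := by
    intro w hw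
    rcases lt_or_eq_of_le (𝔑.nonneg w) with h | h
    · exact h
    · exact absurd ((𝔑.eq_zero_iff w).mp h.symm) hw
  -- λ > 0
  have hlam_pos : 0 < 𝔑.lam := by
    rcases lt_or_eq_of_le 𝔑.lam_nonneg with h | h
    · exact h
    · exfalso
      have he : (fun _ : Fin d => (1 : ℝ)) ≠ 0 := by
        intro hcon
        have := congrFun hcon ⟨0, hd⟩
        norm_num at this
      have hmem : (fun _ : Fin d => (1 : ℝ)) ∈ 𝔑.Es ⊔ 𝔑.Eu := by
        rw [𝔑.compl.sup_eq_top]; trivial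
    -- decompose
      obtain ⟨a, ha, b, hb, hab⟩ := Submodule.mem_sup.mp hmem
      have hzero : ∀ w : Fin d → ℝ, 𝔑.N w ≤ 0 → w = 0 := fun w hw =>
        (𝔑.eq_zero_iff w).mp (le_antisymm hw (𝔑.nonneg w))
      have ha0 : a = 0 := by
        have h1 := 𝔑.contract_s a ha
        rw [← h, zero_mul] at h1
        have h2 := hzero _ h1
        have := hBAvec a
        rw [h2] at this
        simpa [Matrix.mulVec_zero] using this.symm
      have hb0 : b = 0 := by
        have h1 := 𝔑.contract_u b hb
        rw [← h, zero_mul] at h1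
        have h2 := hzero _ h1
        have := hABvec b
        rw [h2] at this
        simpa [Matrix.mulVec_zero] using this.symm
      rw [ha0, hb0, add_zero] at hab
      exact he hab.symm
  -- commutation of projection with the matrix action
  have hcomm : ∀ w, tmap A (Tproj d w) = Tproj d ((matR A).mulVec w) := by
    intro w
    show QuotientAddGroup.map _ _ _ _ (QuotientAddGroup.mk' _ w) = _
    rw [QuotientAddGroup.map_mk']
    rfl
  have hproj : ∀ l : ℕ, Tproj d (f^[l] v) = (⇑(tmap A))^[l] x - (⇑(tmap A))^[l] y := by
    intro l
    induction l with
    | zero => simpa using hv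
    | succ n ih =>
        rw [Function.iterate_succ_apply' f, ← hcomm, ih, map_sub,
          Function.iterate_succ_apply', Function.iterate_succ_apply']
  -- iterates of the components
  have hEs_iter : ∀ l : ℕ, f^[l] vs ∈ 𝔑.Es := by
    intro l
    induction l with
    | zero => simpa using hvs
    | succ n ih => rw [Function.iterate_succ_apply']; exact 𝔑.EsInvA _ ih
  have hEu_iter : ∀ l : ℕ, f^[l] vu ∈ 𝔑.Eu := by
    intro l
    induction l with
    | zero => simpa using hvu
    | succ n ih => rw [Function.iterate_succ_apply']; exact 𝔑.EuInvA _ ih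
  have hdecomp : ∀ l : ℕ, f^[l] v = f^[l] vs + f^[l] vu := by
    intro l
    induction l with
    | zero => simpa using hsum
    | succ n ih =>
        rw [Function.iterate_succ_apply' f, Function.iterate_succ_apply' f,
          Function.iterate_succ_apply' f, ih]
        exact Matrix.mulVec_add _ _ _
  -- expansion of the unstable component
  have hexp : ∀ l : ℕ, 𝔑.N vu ≤ 𝔑.lam ^ l * 𝔑.N (f^[l] vu) := by
    intro l
    induction l with
    | zero => simp
    | succ n ih =>
        have h1 : 𝔑.N (f^[n] vu) ≤ 𝔑.lam * 𝔑.N (f^[n + 1] vu) := by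
          have hc := 𝔑.contract_u (f^[n + 1] vu) (hEu_iter (n + 1))
          have hB : (matR B).mulVec (f^[n + 1] vu) = f^[n] vu := by
            rw [Function.iterate_succ_apply' f]; exact hBAvec _
          rwa [hB] at hc
        calc 𝔑.N vu ≤ 𝔑.lam ^ n * 𝔑.N (f^[n] vu) := ih
          _ ≤ 𝔑.lam ^ n * (𝔑.lam * 𝔑.N (f^[n + 1] vu)) :=
              mul_le_mul_of_nonneg_left h1 (pow_nonneg 𝔑.lam_nonneg n)
          _ = 𝔑.lam ^ (n + 1) * 𝔑.N (f^[n + 1] vu) := by ring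
  -- the key quantitative estimate, for any horizon K'
  have key : ∀ K' : ℕ,
      (∀ l : ℕ, l ≤ K' → qdist 𝔑.N ((⇑(tmap A))^[l] x) ((⇑(tmap A))^[l] y) < ε) →
      𝔑.N vu < 𝔑.lam ^ K' * ε := by
    intro K' hK'
    by_cases hvu0 : vu = 0
    · rw [hvu0, hN0]
      exact mul_pos (pow_pos hlam_pos K') hε
    · have hvupos : 0 < 𝔑.N vu := hNpos vu hvu0
      -- cA > 1
      have hcA1 : 1 < 𝔑.cA := by
        have h1 : 𝔑.N vu ≤ 𝔑.cA * 𝔑.N ((matR B).mulVec vu) := by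
          have := 𝔑.boundA ((matR B).mulVec vu)
          rwa [hABvec] at this
        have h2 : 𝔑.N ((matR B).mulVec vu) ≤ 𝔑.lam * 𝔑.N vu := 𝔑.contract_u vu hvu
        have hNB := 𝔑.nonneg ((matR B).mulVec vu)
        have hcApos : 0 < 𝔑.cA := by nlinarith
        nlinarith [𝔑.lam_lt_one]
      -- all iterates up to K' stay in the small ball
      have hsmall : ∀ l : ℕ, l ≤ K' → 𝔑.N (f^[l] v) < ε := by
        intro l
        induction l with
        | zero => intro _; simpa using hvball
        | succ n ih =>
            intro h
            have hn := ih (Nat.le_of_succ_le h)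
            have hq := hK' (n + 1) h
            -- get a small representative u of the difference
            set S := 𝔑.N '' {w | Tproj d w =
              (⇑(tmap A))^[n + 1] x - (⇑(tmap A))^[n + 1] y} with hS
            have hSne : S.Nonempty := by
              obtain ⟨w0, hw0⟩ := QuotientAddGroup.mk'_surjective (intLattice d)
                ((⇑(tmap A))^[n + 1] x - (⇑(tmap A))^[n + 1] y)
              exact ⟨𝔑.N w0, w0, hw0, rfl⟩
            have hSbdd : BddBelow S := ⟨0, by rintro r ⟨w, -, rfl⟩; exact 𝔑.nonneg w⟩
            have hlt : sInf S < ε := hq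
            obtain ⟨r, ⟨u, hu, rfl⟩, hult⟩ := (csInf_lt_iff hSbdd hSne).mp hlt
            have hmem_u : u ∈ {w | 𝔑.N w < ε * 𝔑.cA} :=
              lt_of_lt_of_le hult (le_mul_of_one_le_right hε.le hcA1.le)
            have hboundn : 𝔑.N (f^[n + 1] v) < ε * 𝔑.cA := by
              rw [Function.iterate_succ_apply' f]
              calc 𝔑.N ((matR A).mulVec (f^[n] v)) ≤ 𝔑.cA * 𝔑.N (f^[n] v) := 𝔑.boundA _
                _ < 𝔑.cA * ε := by
                    exact mul_lt_mul_of_pos_left hn (lt_trans one_pos hcA1)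
                _ = ε * 𝔑.cA := mul_comm _ _
            have heq : f^[n + 1] v = u := by
              apply hinj hboundn hmem_u
              rw [hproj (n + 1)]
              exact hu.symm
            rw [heq]
            exact hult
      -- compare with the unstable component
      have hmax : 𝔑.N (f^[K'] vu) ≤ 𝔑.N (f^[K'] v) := by
        rw [hdecomp K', 𝔑.adapted _ (hEs_iter K') _ (hEu_iter K')]
        exact le_max_right _ _
      calc 𝔑.N vu ≤ 𝔑.lam ^ K' * 𝔑.N (f^[K'] vu) := hexp K'
        _ ≤ 𝔑.lam ^ K' * 𝔑.N (f^[K'] v) :=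
            mul_le_mul_of_nonneg_left hmax (pow_nonneg 𝔑.lam_nonneg K')
        _ < 𝔑.lam ^ K' * ε :=
            mul_lt_mul_of_pos_left (hsmall K' le_rfl) (pow_pos hlam_pos K')
  refine ⟨key K hK, ?_⟩
  intro hall
  have h2 : ∀ n : ℕ, 𝔑.N vu < 𝔑.lam ^ n * ε := fun n => key n (fun l _ => hall l)
  have hten : Filter.Tendsto (fun n : ℕ => 𝔑.lam ^ n * ε) Filter.atTop (nhds 0) := by
    have h := tendsto_pow_atTop_nhds_zero_of_lt_one 𝔑.lam_nonneg 𝔑.lam_lt_one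
    simpa using h.mul_const ε
  have hle : 𝔑.N vu ≤ 0 :=
    ge_of_tendsto hten (Filter.Eventually.of_forall fun n => (h2 n).le)
  have hvu0 : vu = 0 := (𝔑.eq_zero_iff vu).mp (le_antisymm hle (𝔑.nonneg vu))
  rw [hsum, hvu0, add_zero]
  exact hvs

end
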